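/- Let t_n be the Lie algebra with generators t_{ij} = t_{ji} (1 ≤ i < j ≤ n) subject to [t_{ij}, t_{kl}] = 0 when {i,j,k,l} has 4 elements and [t_{ij}, t_{ik}+t_{jk}] = 0 when {i,j,k} has 3 elements. Then for any finite-dimensional complex semisimple Lie algebra g with representations ρ₁,...,ρₙ on V₁,...,Vₙ, the assignment t_{ij} ↦ (ρ₁⊗...⊗ρₙ)(λ^{ij}(Ω)) extends to a Lie algebra homomorphism t_n → End(V₁⊗...⊗Vₙ). -/

import Mathlib

open TensorProduct PiTensorProduct

attribute [local instance 100] LieRing.ofAssociativeRing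

lemma ringlie1 {A : Type*} [Ring A] {a b c d : A} (hbc : Commute b c) (hbd : Commute b d)
    (had : Commute a d) : ⁅a * b, c * d⁆ = (a * c - c * a) * (b * d) := by
  have h1 : a * b * (c * d) = a * c * (b * d) := by
    rw [mul_assoc a b, ← mul_assoc b c, hbc.eq, mul_assoc c b, ← mul_assoc a c]
  have h2 : c * d * (a * b) = c * a * (b * d) := by
    rw [mul_assoc c d, ← mul_assoc d a, ← had.eq, mul_assoc a d, ← hbd.eq,
      ← mul_assoc c a, ← mul_assoc, mul_assoc (c*a)]
  rw [Ring.lie_def, h1, h2, sub_mul]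

lemma ringlie2 {A : Type*} [Ring A] {a b c d : A} (hac : Commute a c) (had : Commute a d)
    (hbd : Commute b d) : ⁅a * b, c * d⁆ = a * ((b * c - c * b) * d) := by
  have h1 : a * b * (c * d) = a * (b * c * d) := by
    rw [mul_assoc a b, ← mul_assoc b c]
  have h2 : c * d * (a * b) = a * (c * b * d) := by
    rw [mul_assoc c d, ← mul_assoc d a, ← had.eq, mul_assoc a d, ← hbd.eq,
      ← mul_assoc c a, ← hac.eq, mul_assoc a c, ← mul_assoc c b d]
  rw [Ring.lie_def, h1, h2, sub_mul, mul_sub]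

section KDaux
variable {g : Type} [LieRing g] [LieAlgebra ℂ g]
variable {n : ℕ} (V : Fin n → Type) [∀ k, AddCommGroup (V k)] [∀ k, Module ℂ (V k)]
  [∀ k, LieRingModule g (V k)] [∀ k, LieModule ℂ g (V k)]

/-- Action of `x : g` on the `i`-th tensor factor. -/
noncomputable def kdA (i : Fin n) (x : g) : Module.End ℂ (⨂[ℂ] k, V k) :=
  PiTensorProduct.map fun k => if k = i then LieModule.toEnd ℂ g (V k) x else LinearMap.id

lemma kd_ifupdate (i : Fin n) (T : ∀ k, V k →ₗ[ℂ] V k) :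
    (fun k => if k = i then T k else LinearMap.id) =
      Function.update (fun k => (LinearMap.id : V k →ₗ[ℂ] V k)) i (T i) := by
  funext k
  rcases eq_or_ne k i with rfl | h
  · simp
  · simp [Function.update_of_ne h, if_neg h]

lemma kd_map_update_sub (i : Fin n) (u v : V i →ₗ[ℂ] V i) :
    PiTensorProduct.map (Function.update (fun k => (LinearMap.id : V k →ₗ[ℂ] V k)) i (u - v)) =
      PiTensorProduct.map (Function.update (fun k => (LinearMap.id : V k →ₗ[ℂ] V k)) i u) -
      PiTensorProduct.map (Function.update (fun k => (LinearMap.id : V k →ₗ[ℂ] V k)) i v) := by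
  have h := PiTensorProduct.map_update_add (f := fun k => (LinearMap.id : V k →ₗ[ℂ] V k))
    i (u - v) v
  rw [sub_add_cancel] at h
  exact eq_sub_of_add_eq h.symm

lemma kdA_add (i : Fin n) (x y : g) : kdA V i (x + y) = kdA V i x + kdA V i y := by
  simp only [kdA, kd_ifupdate, map_add]
  rw [PiTensorProduct.map_update_add]

lemma kdA_smul (i : Fin n) (c : ℂ) (x : g) : kdA V i (c • x) = c • kdA V i x := by
  simp only [kdA, kd_ifupdate, map_smul]
  rw [PiTensorProduct.map_update_smul]

/-- `kdA` as a linear map in `x`. -/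
noncomputable def kdAL (i : Fin n) : g →ₗ[ℂ] Module.End ℂ (⨂[ℂ] k, V k) where
  toFun := kdA V i
  map_add' := kdA_add V i
  map_smul' := kdA_smul V i

@[simp] lemma kdAL_apply (i : Fin n) (x : g) : kdAL V i x = kdA V i x := rfl

lemma kdA_neg (i : Fin n) (x : g) : kdA V i (-x) = -kdA V i x :=
  map_neg (kdAL V i) x

lemma kdA_mul_same (i : Fin n) (x y : g) :
    kdA V i x * kdA V i y = PiTensorProduct.map
      (fun k => if k = i then LieModule.toEnd ℂ g (V k) x ∘ₗ LieModule.toEnd ℂ g (V k) y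
        else LinearMap.id) := by
  rw [kdA, kdA, Module.End.mul_eq_comp, ← PiTensorProduct.map_comp]
  congr 1
  funext k
  split_ifs with h
  · rfl
  · simp

lemma kdA_lie (i : Fin n) (x y : g) :
    kdA V i x * kdA V i y - kdA V i y * kdA V i x = kdA V i ⁅x, y⁆ := by
  rw [kdA_mul_same, kdA_mul_same, kdA, kd_ifupdate, kd_ifupdate, kd_ifupdate,
    ← kd_map_update_sub]
  congr 1
  rw [LieHom.map_lie, Ring.lie_def, Module.End.mul_eq_comp, Module.End.mul_eq_comp]

lemma kdA_mul_ne {i j : Fin n} (hij : i ≠ j) (x y : g) :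
    kdA V i x * kdA V j y = PiTensorProduct.map
      (fun k => if k = i then LieModule.toEnd ℂ g (V k) x
        else if k = j then LieModule.toEnd ℂ g (V k) y else LinearMap.id) := by
  rw [kdA, kdA, Module.End.mul_eq_comp, ← PiTensorProduct.map_comp]
  congr 1
  funext k
  by_cases h1 : k = i <;> by_cases h2 : k = j
  · exact absurd (h1.symm.trans h2) hij
  · simp [h1, h2, hij, hij.symm]
  · simp [h1, h2, hij, hij.symm]
  · simp [h1, h2, hij, hij.symm]

lemma kdA_comm {i j : Fin n} (hij : i ≠ j) (x y : g) :
    Commute (kdA V i x) (kdA V j y) := by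
  unfold Commute SemiconjBy
  rw [kdA_mul_ne V hij, kdA_mul_ne V hij.symm]
  congr 1
  funext k
  by_cases h1 : k = i <;> by_cases h2 : k = j
  · exact absurd (h1.symm.trans h2) hij
  · simp [h1, h2, hij, hij.symm]
  · simp [h1, h2, hij, hij.symm]
  · simp [h1, h2, hij, hij.symm]

end KDaux

/-- The defining relations of the Kohno–Drinfeld Lie algebra `t_n`, as elements of the free
Lie algebra on symbols `t_{ij}` indexed by pairs `(i,j)`: the symmetry relations
`t_{ij} = t_{ji}`, the commutation relations `[t_{ij}, t_{kl}] = 0` for `#{i,j,k,l} = 4`,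
and `[t_{ij}, t_{ik} + t_{jk}] = 0` for `#{i,j,k} = 3`. -/
def kdRels (n : ℕ) : Set (FreeLieAlgebra ℂ (Fin n × Fin n)) :=
  {x | (∃ i j : Fin n, i ≠ j ∧
          x = FreeLieAlgebra.of ℂ (i, j) - FreeLieAlgebra.of ℂ (j, i)) ∨
       (∃ i j k l : Fin n, i ≠ j ∧ i ≠ k ∧ i ≠ l ∧ j ≠ k ∧ j ≠ l ∧ k ≠ l ∧
          x = ⁅FreeLieAlgebra.of ℂ (i, j), FreeLieAlgebra.of ℂ (k, l)⁆) ∨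
       (∃ i j k : Fin n, i ≠ j ∧ j ≠ k ∧ i ≠ k ∧
          x = ⁅FreeLieAlgebra.of ℂ (i, j),
                FreeLieAlgebra.of ℂ (i, k) + FreeLieAlgebra.of ℂ (j, k)⁆)}

/-- The Kohno–Drinfeld Lie algebra `t_n`: the quotient of the free Lie algebra on the `t_{ij}`
by the Lie ideal generated by the defining relations. -/
abbrev KohnoDrinfeld (n : ℕ) :=
  FreeLieAlgebra ℂ (Fin n × Fin n) ⧸
    LieSubmodule.lieSpan ℂ (FreeLieAlgebra ℂ (Fin n × Fin n)) (kdRels n)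

/-- The generator `t_{ij}` of the Kohno–Drinfeld Lie algebra. -/
noncomputable def kdGen {n : ℕ} (i j : Fin n) : KohnoDrinfeld n :=
  LieSubmodule.Quotient.mk (FreeLieAlgebra.of ℂ (i, j))

/-- Given representations `ρ₁, …, ρₙ` of a finite-dimensional complex semisimple Lie algebra
`g` on `V₁, …, Vₙ` and an orthonormal basis `{I_μ}` for the Killing form, the assignment
`t_{ij} ↦ (ρ₁⊗⋯⊗ρₙ)(λ^{ij}(Ω))` (i.e. `Σ_μ` acting by `I_μ` on factors `i` and `j` and the
identity elsewhere) extends to a Lie algebra homomorphism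
`t_n → End(V₁ ⊗ ⋯ ⊗ Vₙ)`. -/
theorem kohnoDrinfeld_representation (g : Type) [LieRing g] [LieAlgebra ℂ g]
    [Module.Finite ℂ g] [LieAlgebra.IsSemisimple ℂ g] (m : ℕ) (b : Module.Basis (Fin m) ℂ g)
    (hb : ∀ μ ν, killingForm ℂ g (b μ) (b ν) = if μ = ν then 1 else 0)
    (n : ℕ) (V : Fin n → Type) [∀ k, AddCommGroup (V k)] [∀ k, Module ℂ (V k)]
    [∀ k, LieRingModule g (V k)] [∀ k, LieModule ℂ g (V k)] :
    ∃ φ : KohnoDrinfeld n →ₗ⁅ℂ⁆ Module.End ℂ (⨂[ℂ] k, V k),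
      ∀ i j : Fin n, i ≠ j →
        φ (kdGen i j) =
          ∑ μ, PiTensorProduct.map fun k =>
            if k = i ∨ k = j then LieModule.toEnd ℂ g (V k) (b μ) else LinearMap.id := by
  -- coefficient lemma
  have hco : ∀ (x : g) (ν : Fin m), killingForm ℂ g x (b ν) = b.repr x ν := by
    intro x ν
    conv_lhs => rw [← b.sum_repr x]
    simp only [map_sum, map_smul, LinearMap.sum_apply, LinearMap.smul_apply, hb, smul_eq_mul,
      mul_ite, mul_one, mul_zero]
    rw [Finset.sum_ite_eq' Finset.univ ν (fun μ => b.repr x μ)]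
    simp
  have hrepr : ∀ x : g, x = ∑ ν, killingForm ℂ g x (b ν) • b ν := by
    intro x
    simp_rw [hco]
    exact (b.sum_repr x).symm
  have hskew : ∀ (x : g) (μ ν : Fin m),
      killingForm ℂ g ⁅x, b μ⁆ (b ν) = - killingForm ℂ g ⁅x, b ν⁆ (b μ) := by
    intro x μ ν
    rw [LieModule.traceForm_apply_lie_apply, LieModule.traceForm_apply_lie_apply,
      show ⁅b μ, b ν⁆ = -⁅b ν, b μ⁆ from (lie_skew _ _).symm, map_neg]
  -- invariance of the Casimir-type sum
  have inv : ∀ (i j : Fin n), i ≠ j → ∀ x : g,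
      ∑ μ, (kdA V i ⁅x, b μ⁆ * kdA V j (b μ) + kdA V i (b μ) * kdA V j ⁅x, b μ⁆) = 0 := by
    intro i j hij x
    have e1 : ∀ μ, kdA V i ⁅x, b μ⁆ * kdA V j (b μ)
        = ∑ ν, killingForm ℂ g ⁅x, b μ⁆ (b ν) • (kdA V i (b ν) * kdA V j (b μ)) := by
      intro μ
      conv_lhs => rw [hrepr ⁅x, b μ⁆]
      rw [show kdA V i (∑ ν, killingForm ℂ g ⁅x, b μ⁆ (b ν) • b ν)
            = ∑ ν, killingForm ℂ g ⁅x, b μ⁆ (b ν) • kdA V i (b ν) by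
          rw [← kdAL_apply, map_sum]; simp only [map_smul, kdAL_apply]]
      rw [Finset.sum_mul]
      simp_rw [smul_mul_assoc]
    have e2 : ∀ μ, kdA V i (b μ) * kdA V j ⁅x, b μ⁆
        = ∑ ν, killingForm ℂ g ⁅x, b μ⁆ (b ν) • (kdA V i (b μ) * kdA V j (b ν)) := by
      intro μ
      conv_lhs => rw [hrepr ⁅x, b μ⁆]
      rw [show kdA V j (∑ ν, killingForm ℂ g ⁅x, b μ⁆ (b ν) • b ν)
            = ∑ ν, killingForm ℂ g ⁅x, b μ⁆ (b ν) • kdA V j (b ν) by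
          rw [← kdAL_apply, map_sum]; simp only [map_smul, kdAL_apply]]
      rw [Finset.mul_sum]
      simp_rw [mul_smul_comm]
    simp_rw [e1, e2]
    rw [Finset.sum_add_distrib,
      Finset.sum_comm (f := fun μ ν => killingForm ℂ g ⁅x, b μ⁆ (b ν) • (kdA V i (b ν) * kdA V j (b μ))),
      ← Finset.sum_add_distrib]
    apply Finset.sum_eq_zero
    intro o _
    rw [← Finset.sum_add_distrib]
    apply Finset.sum_eq_zero
    intro p _
    rw [hskew x p o]
    module
  -- the generator images
  set F : Fin n × Fin n → Module.End ℂ (⨂[ℂ] k, V k) :=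
    fun p => ∑ μ, kdA V p.1 (b μ) * kdA V p.2 (b μ) with hF
  set L := FreeLieAlgebra.lift ℂ F with hL
  have hLof : ∀ p : Fin n × Fin n, L (FreeLieAlgebra.of ℂ p) = F p :=
    fun p => FreeLieAlgebra.lift_of_apply F p
  -- bilinearity of bracket over sums in End
  have sum_lie_sum : ∀ X Y : Fin m → Module.End ℂ (⨂[ℂ] k, V k),
      ⁅∑ μ, X μ, ∑ ν, Y ν⁆ = ∑ ν, ∑ μ, ⁅X μ, Y ν⁆ := by
    intro X Y
    simp_rw [Ring.lie_def, Finset.sum_mul, Finset.mul_sum]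
    rw [Finset.sum_comm (f := fun μ ν => X μ * Y ν), ← Finset.sum_sub_distrib]
    refine Finset.sum_congr rfl fun ν _ => ?_
    rw [← Finset.sum_sub_distrib]
  -- the three relations
  have rel1 : ∀ i j : Fin n, i ≠ j → F (i, j) = F (j, i) := by
    intro i j hij
    refine Finset.sum_congr rfl fun μ _ => ?_
    exact (kdA_comm V hij (b μ) (b μ)).eq
  have rel2 : ∀ i j k l : Fin n, i ≠ k → i ≠ l → j ≠ k → j ≠ l →
      ⁅F (i, j), F (k, l)⁆ = 0 := by
    intro i j k l hik hil hjk hjl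
    have hc : Commute (F (i, j)) (F (k, l)) := by
      refine Commute.sum_left _ _ _ fun μ _ => ?_
      refine Commute.sum_right _ _ _ fun ν _ => ?_
      exact ((kdA_comm V hik (b μ) (b ν)).mul_right (kdA_comm V hil (b μ) (b ν))).mul_left
        ((kdA_comm V hjk (b μ) (b ν)).mul_right (kdA_comm V hjl (b μ) (b ν)))
    exact hc.lie_eq
  have rel3 : ∀ i j k : Fin n, i ≠ j → j ≠ k → i ≠ k →
      ⁅F (i, j), F (i, k) + F (j, k)⁆ = 0 := by
    intro i j k hij hjk hik
    have key : ∀ ν, ∑ μ, (kdA V i ⁅b μ, b ν⁆ * kdA V j (b μ)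
        + kdA V i (b μ) * kdA V j ⁅b μ, b ν⁆) = 0 := by
      intro ν
      have h0 := inv i j hij (b ν)
      have hterm : ∀ μ, kdA V i ⁅b μ, b ν⁆ * kdA V j (b μ)
          + kdA V i (b μ) * kdA V j ⁅b μ, b ν⁆
          = -(kdA V i ⁅b ν, b μ⁆ * kdA V j (b μ) + kdA V i (b μ) * kdA V j ⁅b ν, b μ⁆) := by
        intro μ
        rw [show ⁅b μ, b ν⁆ = -⁅b ν, b μ⁆ from (lie_skew _ _).symm, kdA_neg, kdA_neg]
        rw [neg_mul (kdA V i ⁅b ν, b μ⁆) (kdA V j (b μ)),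
          mul_neg (kdA V i (b μ)) (kdA V j ⁅b ν, b μ⁆),
          ← neg_add (kdA V i ⁅b ν, b μ⁆ * kdA V j (b μ))
            (kdA V i (b μ) * kdA V j ⁅b ν, b μ⁆)]
      rw [Finset.sum_congr rfl fun μ _ => hterm μ, Finset.sum_neg_distrib, h0, neg_zero]
    have e1 : ⁅F (i, j), F (i, k)⁆
        = ∑ ν, ∑ μ, (kdA V i ⁅b μ, b ν⁆ * kdA V j (b μ)) * kdA V k (b ν) := by
      rw [hF]
      rw [sum_lie_sum]
      refine Finset.sum_congr rfl fun ν _ => Finset.sum_congr rfl fun μ _ => ?_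
      rw [ringlie1 (kdA_comm V hij.symm (b μ) (b ν)) (kdA_comm V hjk (b μ) (b ν))
        (kdA_comm V hik (b μ) (b ν)), kdA_lie, ← mul_assoc]
    have e2 : ⁅F (i, j), F (j, k)⁆
        = ∑ ν, ∑ μ, (kdA V i (b μ) * kdA V j ⁅b μ, b ν⁆) * kdA V k (b ν) := by
      rw [hF]
      rw [sum_lie_sum]
      refine Finset.sum_congr rfl fun ν _ => Finset.sum_congr rfl fun μ _ => ?_
      rw [ringlie2 (kdA_comm V hij (b μ) (b ν)) (kdA_comm V hik (b μ) (b ν))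
        (kdA_comm V hjk (b μ) (b ν)), kdA_lie, ← mul_assoc]
    rw [lie_add, e1, e2, ← Finset.sum_add_distrib]
    apply Finset.sum_eq_zero
    intro ν _
    rw [← Finset.sum_mul, ← Finset.sum_mul, ← add_mul, ← Finset.sum_add_distrib, key ν,
      zero_mul]
  -- the relations lie in the kernel
  have hker : LieSubmodule.lieSpan ℂ (FreeLieAlgebra ℂ (Fin n × Fin n)) (kdRels n) ≤ L.ker := by
    rw [LieSubmodule.lieSpan_le]
    rintro x (⟨i, j, hij, rfl⟩ | ⟨i, j, k, l, hij, hik, hil, hjk, hjl, hkl, rfl⟩ |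
      ⟨i, j, k, hij, hjk, hik, rfl⟩) <;> rw [SetLike.mem_coe, LieHom.mem_ker]
    · rw [map_sub, hLof, hLof, rel1 i j hij, sub_self]
    · rw [LieHom.map_lie, hLof, hLof, rel2 i j k l hik hil hjk hjl]
    · rw [LieHom.map_lie, map_add, hLof, hLof, hLof, rel3 i j k hij hjk hik]
  have hker' : (LieSubmodule.lieSpan ℂ (FreeLieAlgebra ℂ (Fin n × Fin n))
      (kdRels n)).toSubmodule ≤ LinearMap.ker (L : FreeLieAlgebra ℂ (Fin n × Fin n) →ₗ[ℂ]
        Module.End ℂ (⨂[ℂ] k, V k)) := by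
    intro x hx
    have hx' : x ∈ L.ker := hker hx
    rw [LieHom.mem_ker] at hx'
    exact LinearMap.mem_ker.mpr hx'
  set φ₀ : KohnoDrinfeld n →ₗ[ℂ] Module.End ℂ (⨂[ℂ] k, V k) :=
    Submodule.liftQ _ (L : FreeLieAlgebra ℂ (Fin n × Fin n) →ₗ[ℂ]
      Module.End ℂ (⨂[ℂ] k, V k)) hker' with hφ₀
  have hφ₀mk : ∀ y : FreeLieAlgebra ℂ (Fin n × Fin n),
      φ₀ (LieSubmodule.Quotient.mk (N := LieSubmodule.lieSpan ℂ _ (kdRels n)) y) = L y :=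
    fun y => rfl
  refine ⟨{ toLinearMap := φ₀, map_lie' := ?_ }, ?_⟩
  · intro x y
    obtain ⟨x, rfl⟩ := LieSubmodule.Quotient.surjective_mk' _ x
    obtain ⟨y, rfl⟩ := LieSubmodule.Quotient.surjective_mk' _ y
    have hmk' : ∀ z : FreeLieAlgebra ℂ (Fin n × Fin n),
        LieSubmodule.Quotient.mk'
            (LieSubmodule.lieSpan ℂ (FreeLieAlgebra ℂ (Fin n × Fin n)) (kdRels n)) z
          = LieSubmodule.Quotient.mk
            (N := LieSubmodule.lieSpan ℂ (FreeLieAlgebra ℂ (Fin n × Fin n)) (kdRels n)) z :=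
      fun _ => rfl
    exact L.map_lie x y
  · intro i j hij
    have h1 : φ₀ (kdGen i j) = F (i, j) := by
      rw [show φ₀ (kdGen i j) = L (FreeLieAlgebra.of ℂ (i, j)) from hφ₀mk _, hLof]
    show φ₀ (kdGen i j) = _
    rw [h1, hF]
    refine Finset.sum_congr rfl fun μ _ => ?_
    rw [kdA_mul_ne V hij]
    congr 1
    funext k
    by_cases h1 : k = i <;> by_cases h2 : k = j <;> simp [h1, h2]
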